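/- Let F ∈ ℂ[x,y,z,t,w] be weighted homogeneous of degree 8 with respect to the weights (1,1,2,2,3) and quasi-smooth. Then the binary form q(z,t) = F(0,0,z,t,0) ∈ ℂ[z,t] — which is homogeneous of ordinary degree 4 in z and t — is nonzero and squarefree; equivalently, q has four distinct roots in ℙ¹. -/

import Mathlib

open MvPolynomial

lemma weight5_apply (d : Fin 5 →₀ ℕ) :
    (Finsupp.weight (![1,1,2,2,3] : Fin 5 → ℕ)) d
      = d 0 * 1 + d 1 * 1 + d 2 * 2 + d 3 * 2 + d 4 * 3 := by
  rw [Finsupp.weight_apply, Finsupp.sum_fintype]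
  · simp [Fin.sum_univ_five]
  · intro i; simp

lemma parity_eval {G : MvPolynomial (Fin 5) ℂ} {m : ℕ}
    (hG : IsWeightedHomogeneous (![1,1,2,2,3] : Fin 5 → ℕ) G m) (hm : ¬ 2 ∣ m)
    (p : Fin 5 → ℂ) (h0 : p 0 = 0) (h1 : p 1 = 0) (h4 : p 4 = 0) :
    eval p G = 0 := by
  rw [eval_eq']
  apply Finset.sum_eq_zero
  intro d hd
  have hw := hG (mem_support_iff.mp hd)
  rw [weight5_apply] at hw
  have hkey : d 0 ≠ 0 ∨ d 1 ≠ 0 ∨ d 4 ≠ 0 := by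
    by_contra hcon
    push_neg at hcon
    obtain ⟨a, b, c⟩ := hcon
    exact hm ⟨d 2 + d 3, by omega⟩
  have : ∃ i : Fin 5, p i = 0 ∧ d i ≠ 0 := by
    rcases hkey with h | h | h
    · exact ⟨0, h0, h⟩
    · exact ⟨1, h1, h⟩
    · exact ⟨4, h4, h⟩
  obtain ⟨i, hpi, hdi⟩ := this
  rw [Finset.prod_eq_zero (Finset.mem_univ i) (by rw [hpi]; exact zero_pow hdi), mul_zero]

lemma pderiv_isWeightedHomogeneous {σ : Type*} [DecidableEq σ] {w : σ → ℕ}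
    {F : MvPolynomial σ ℂ} {m : ℕ}
    (hF : IsWeightedHomogeneous w F m) (i : σ) :
    IsWeightedHomogeneous w (pderiv i F) (m - w i) := by
  conv_lhs => rw [F.as_sum]
  rw [map_sum]
  apply IsWeightedHomogeneous.sum
  intro d hd
  rw [pderiv_monomial]
  rcases Nat.eq_zero_or_pos (d i) with h | h
  · rw [h]
    simp only [Nat.cast_zero, mul_zero, monomial_zero]
    exact isWeightedHomogeneous_zero _ _ _
  · apply isWeightedHomogeneous_monomial
    have hwd : Finsupp.weight w d = m := hF (mem_support_iff.mp hd)
    have hsub : (d - Finsupp.single i 1) + Finsupp.single i 1 = d := by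
      ext j
      rcases eq_or_ne j i with rfl | hj
      · simp only [Finsupp.coe_add, Pi.add_apply, Finsupp.coe_tsub, Pi.sub_apply,
          Finsupp.single_eq_same]
        omega
      · simp [Finsupp.single_eq_of_ne' (Ne.symm hj)]
    have := congrArg (Finsupp.weight w) hsub
    rw [map_add] at this
    have hsingle : Finsupp.weight w (Finsupp.single i 1) = w i := by
      simp [Finsupp.weight_apply, Finsupp.sum_single_index]
    rw [hsingle, hwd] at this
    omega

lemma pderiv_aeval_gen (s : Fin 5 → MvPolynomial (Fin 2) ℂ) (k : Fin 2) (i5 : Fin 5)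
    (hk : ∀ i : Fin 5, pderiv k (s i) = if i = i5 then 1 else 0)
    (F : MvPolynomial (Fin 5) ℂ) :
    pderiv k (aeval s F) = aeval s (pderiv i5 F) := by
  induction F using MvPolynomial.induction_on with
  | C a => simp
  | add p q ihp ihq => rw [map_add, map_add, map_add, ihp, ihq, map_add]
  | mul_X p n ih =>
      rw [map_mul, aeval_X, pderiv_mul, ih, pderiv_mul, map_add, map_mul, aeval_X, map_mul]
      congr 1
      congr 1
      rcases eq_or_ne n i5 with rfl | hne
      · rw [pderiv_X_self, hk n, if_pos rfl, map_one]
      · rw [pderiv_X_of_ne hne, hk n, if_neg hne, map_zero]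

lemma eval_aeval' (v : Fin 2 → ℂ) (s : Fin 5 → MvPolynomial (Fin 2) ℂ)
    (G : MvPolynomial (Fin 5) ℂ) :
    eval v (aeval s G) = eval (fun i => eval v (s i)) G := by
  induction G using MvPolynomial.induction_on with
  | C a => simp
  | add p q ihp ihq => rw [map_add, map_add, map_add, ihp, ihq]
  | mul_X p n ih => rw [map_mul, map_mul, aeval_X, map_mul, ih, eval_X]

lemma exists_nonzero_zero_aux (g : MvPolynomial (Fin 2) ℂ)
    (hdeg : degreeOf 0 g ≠ 0) :
    ∃ v : Fin 2 → ℂ, v ≠ 0 ∧ eval v g = 0 := by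
  set G := finSuccEquiv ℂ 1 g with hG
  have hndeg : G.natDegree ≠ 0 := by rw [hG, natDegree_finSuccEquiv]; exact hdeg
  have hGne : G ≠ 0 := fun h => hndeg (by rw [h, Polynomial.natDegree_zero])
  have hc : G.leadingCoeff ≠ 0 := Polynomial.leadingCoeff_ne_zero.mpr hGne
  have hcx : G.leadingCoeff * X 0 ≠ 0 := mul_ne_zero hc (X_ne_zero 0)
  have : ∃ u : Fin 1 → ℂ, eval u (G.leadingCoeff * X 0) ≠ 0 := by
    by_contra hcon
    push_neg at hcon
    exact hcx (MvPolynomial.funext (fun x => by rw [hcon x, map_zero]))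
  obtain ⟨u, hu⟩ := this
  rw [map_mul, eval_X] at hu
  have hu1 : eval u G.leadingCoeff ≠ 0 := fun h => hu (by rw [h, zero_mul])
  have hu2 : u 0 ≠ 0 := fun h => hu (by rw [h, mul_zero])
  set P := G.map (eval u) with hP
  have hPdeg : P.natDegree = G.natDegree :=
    Polynomial.natDegree_map_of_leadingCoeff_ne_zero _ hu1
  have hPd : P.degree ≠ 0 :=
    Polynomial.degree_ne_of_natDegree_ne (by rw [hPdeg]; exact hndeg)
  obtain ⟨z0, hz0⟩ := IsAlgClosed.exists_root P hPd
  refine ⟨Fin.cons z0 u, ?_, ?_⟩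
  · intro h
    apply hu2
    have := congrFun h 1
    simpa using this
  · rw [eval_eq_eval_mv_eval' u z0 g]
    exact hz0

lemma exists_nonzero_zero (g : MvPolynomial (Fin 2) ℂ) (hg : g ≠ 0) (hu : ¬ IsUnit g) :
    ∃ v : Fin 2 → ℂ, v ≠ 0 ∧ eval v g = 0 := by
  by_cases h0 : degreeOf 0 g ≠ 0
  · exact exists_nonzero_zero_aux g h0
  by_cases h1 : degreeOf 1 g ≠ 0
  · have hswap : degreeOf 0 (rename (Equiv.swap (0:Fin 2) 1) g) ≠ 0 := by
      have := MvPolynomial.degreeOf_rename_of_injective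
        (Equiv.injective (Equiv.swap (0:Fin 2) 1)) (1 : Fin 2) (p := g)
      rw [Equiv.swap_apply_right] at this
      rw [this]
      exact h1
    obtain ⟨v, hv, hev⟩ := exists_nonzero_zero_aux _ hswap
    rw [eval_rename] at hev
    refine ⟨v ∘ (Equiv.swap (0:Fin 2) 1), ?_, hev⟩
    intro h
    apply hv
    funext j
    have := congrFun h ((Equiv.swap (0:Fin 2) 1) j)
    simpa using this
  · exfalso
    push_neg at h0 h1
    have hsupp : ∀ m ∈ g.support, m = 0 := by
      intro m hm
      ext j
      have hle : ∀ i : Fin 2, m i ≤ degreeOf i g := by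
        intro i
        rw [degreeOf_eq_sup]
        exact Finset.le_sup (f := fun m => m i) hm
      fin_cases j
      · have := hle 0; simp only [h0, Nat.le_zero] at this; simpa using this
      · have := hle 1; simp only [h1, Nat.le_zero] at this; simpa using this
    have hgc : g = C (coeff 0 g) := by
      ext m
      rcases eq_or_ne m 0 with rfl | hm
      · simp
      · rw [coeff_C, if_neg (Ne.symm hm)]
        by_contra hne
        exact hm (hsupp m (mem_support_iff.mpr hne))
    apply hu
    rw [hgc]
    apply IsUnit.map
    exact (isUnit_iff_ne_zero.mpr (fun h => hg (by rw [hgc, h, map_zero])))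

lemma q_homog (F : MvPolynomial (Fin 5) ℂ)
    (hhom : IsWeightedHomogeneous (![1, 1, 2, 2, 3] : Fin 5 → ℕ) F 8) :
    (aeval ((fun i : Fin 5 => if i = 2 then X 0 else if i = 3 then X 1 else 0) :
        Fin 5 → MvPolynomial (Fin 2) ℂ) F).IsHomogeneous 4 := by
  set s : Fin 5 → MvPolynomial (Fin 2) ℂ :=
    fun i => if i = 2 then X 0 else if i = 3 then X 1 else 0 with hs
  conv_lhs => rw [F.as_sum]
  rw [map_sum]
  apply IsHomogeneous.sum
  intro d hd
  have hw := hhom (mem_support_iff.mp hd)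
  rw [weight5_apply] at hw
  rw [aeval_monomial, Finsupp.prod_fintype _ _ (fun i => pow_zero (s i)), Fin.prod_univ_five]
  have hs0 : s 0 = 0 := rfl
  have hs1 : s 1 = 0 := rfl
  have hs2 : s 2 = X 0 := rfl
  have hs3 : s 3 = X 1 := rfl
  have hs4 : s 4 = 0 := rfl
  by_cases hA : d 0 = 0 ∧ d 1 = 0 ∧ d 4 = 0
  · obtain ⟨h0, h1, h4⟩ := hA
    simp only [hs0, hs1, hs2, hs3, hs4, h0, h1, h4, pow_zero, one_mul, mul_one]
    rw [algebraMap_eq]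
    have hres : ((C (coeff d F) : MvPolynomial (Fin 2) ℂ) * (X 0 ^ d 2 * X 1 ^ d 3)).IsHomogeneous
        (0 + (d 2 + d 3)) :=
      (isHomogeneous_C _ _).mul ((isHomogeneous_X_pow _ _).mul (isHomogeneous_X_pow _ _))
    have h43 : 0 + (d 2 + d 3) = 4 := by omega
    convert hres using 2
    omega
  · have hkey : d 0 ≠ 0 ∨ d 1 ≠ 0 ∨ d 4 ≠ 0 := by tauto
    have hzero : s 0 ^ d 0 * s 1 ^ d 1 * s 2 ^ d 2 * s 3 ^ d 3 * s 4 ^ d 4 = 0 := by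
      rcases hkey with h | h | h
      · rw [hs0, zero_pow h]; ring
      · rw [hs1, zero_pow h]; ring
      · rw [hs4, zero_pow h]; ring
    rw [hzero, mul_zero]
    exact isHomogeneous_zero _ _ _

/-- Family No. 7: for a quasi-smooth weighted homogeneous `F` of degree 8 with
weights `(1,1,2,2,3)`, the binary form `q(z,t) = F(0,0,z,t,0)` is homogeneous of
degree 4, nonzero and squarefree. -/
theorem family7_binary_quartic_squarefree
    (F : MvPolynomial (Fin 5) ℂ)
    (hhom : IsWeightedHomogeneous (![1, 1, 2, 2, 3] : Fin 5 → ℕ) F 8)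
    (hqs : ∀ p : Fin 5 → ℂ, (∀ i : Fin 5, eval p (pderiv i F) = 0) → p = 0) :
    (aeval ((fun i : Fin 5 => if i = 2 then X 0 else if i = 3 then X 1 else 0) :
        Fin 5 → MvPolynomial (Fin 2) ℂ) F).IsHomogeneous 4 ∧
      aeval ((fun i : Fin 5 => if i = 2 then X 0 else if i = 3 then X 1 else 0) :
        Fin 5 → MvPolynomial (Fin 2) ℂ) F ≠ 0 ∧
      Squarefree
        (aeval ((fun i : Fin 5 => if i = 2 then X 0 else if i = 3 then X 1 else 0) :
          Fin 5 → MvPolynomial (Fin 2) ℂ) F) := by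
  set s : Fin 5 → MvPolynomial (Fin 2) ℂ :=
    fun i => if i = 2 then X 0 else if i = 3 then X 1 else 0 with hs
  set q : MvPolynomial (Fin 2) ℂ := aeval s F with hq
  have hsf : Squarefree q := by
    intro g hg
    by_contra hgu
    -- find a nonzero common zero of the partial derivatives of q
    have hv : ∃ v : Fin 2 → ℂ, v ≠ 0 ∧
        eval v (pderiv 0 q) = 0 ∧ eval v (pderiv 1 q) = 0 := by
      rcases eq_or_ne g 0 with rfl | hg0
      · have hq0 : q = 0 := zero_dvd_iff.mp (by simpa using hg)
        refine ⟨![1, 0], ?_, by simp [hq0], by simp [hq0]⟩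
        intro h
        have := congrFun h 0
        simp at this
      · obtain ⟨v, hvne, hev⟩ := exists_nonzero_zero g hg0 hgu
        obtain ⟨c, hc⟩ := hg
        refine ⟨v, hvne, ?_, ?_⟩ <;>
          simp [hc, mul_assoc, pderiv_mul, hev]
    obtain ⟨v, hvne, hev0, hev1⟩ := hv
    set p : Fin 5 → ℂ := fun i => if i = 2 then v 0 else if i = 3 then v 1 else 0 with hp
    have hps : (fun i => eval v (s i)) = p := by
      funext i
      fin_cases i <;> simp [hs, hp]
    have hk2 : ∀ i : Fin 5, pderiv (0 : Fin 2) (s i) = if i = 2 then 1 else 0 := by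
      intro i
      fin_cases i <;> simp [hs, pderiv_X_of_ne]
    have hk3 : ∀ i : Fin 5, pderiv (1 : Fin 2) (s i) = if i = 3 then 1 else 0 := by
      intro i
      fin_cases i <;> simp [hs, pderiv_X_of_ne]
    have hall : ∀ i : Fin 5, eval p (pderiv i F) = 0 := by
      intro i
      have hp0 : p 0 = 0 := rfl
      have hp1 : p 1 = 0 := rfl
      have hp4 : p 4 = 0 := rfl
      fin_cases i
      · exact parity_eval (pderiv_isWeightedHomogeneous hhom 0) (by decide) p hp0 hp1 hp4
      · exact parity_eval (pderiv_isWeightedHomogeneous hhom 1) (by decide) p hp0 hp1 hp4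
      · show eval p (pderiv (2 : Fin 5) F) = 0
        rw [← hps, ← eval_aeval', ← pderiv_aeval_gen s 0 2 hk2, ← hq]
        exact hev0
      · show eval p (pderiv (3 : Fin 5) F) = 0
        rw [← hps, ← eval_aeval', ← pderiv_aeval_gen s 1 3 hk3, ← hq]
        exact hev1
      · exact parity_eval (pderiv_isWeightedHomogeneous hhom 4) (by decide) p hp0 hp1 hp4
    have hp0 := hqs p hall
    apply hvne
    funext j
    fin_cases j
    · have := congrFun hp0 2
      simpa [hp] using this
    · have := congrFun hp0 3
      simpa [hp] using this
  exact ⟨q_homog F hhom, hsf.ne_zero, hsf⟩
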